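/- If Σ = I_k + η 1_k' + 1_k η' is positive definite for some η ∈ ℝᵏ (a type-H matrix), then Σ⁻¹ - Σ⁻¹ 1_k 1_k' Σ⁻¹/(1_k' Σ⁻¹ 1_k) = I_k - (1/k) 1_k 1_k'. -/

import Mathlib

open Matrix

section TypeHHelpers

variable {k : ℕ}


lemma vmv_mulVec (a b v : Fin k → ℝ) :
    (vecMulVec a b).mulVec v = (b ⬝ᵥ v) • a := by
  ext i
  simp [vecMulVec, mulVec, dotProduct, Finset.mul_sum, mul_comm, mul_left_comm]

lemma mul_vmv (M : Matrix (Fin k) (Fin k) ℝ) (a b : Fin k → ℝ) :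
    M * vecMulVec a b = vecMulVec (M.mulVec a) b := by
  ext i j
  simp [vecMulVec, mul_apply, mulVec, dotProduct, Finset.sum_mul, mul_assoc]


end TypeHHelpers

/-- for a positive definite type-H matrix `Σ`, the matrix
`Σ⁻¹ - Σ⁻¹1 1'Σ⁻¹/(1'Σ⁻¹1)` is the centering projection `I - (1/k)1 1'`. -/
theorem typeH_gives_centering_projection
    (k : ℕ) (hk : 0 < k) (η : Fin k → ℝ)
    (S : Matrix (Fin k) (Fin k) ℝ)
    (hSdef : S = 1 + vecMulVec η (fun _ => 1) + vecMulVec (fun _ => 1) η)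
    (hS : S.PosDef) :
    S⁻¹ - ((fun _ => (1 : ℝ)) ⬝ᵥ S⁻¹.mulVec (fun _ => 1))⁻¹ •
        vecMulVec (S⁻¹.mulVec (fun _ => 1)) (S⁻¹.mulVec (fun _ => 1))
      = 1 - (k : ℝ)⁻¹ • vecMulVec (fun _ => 1) (fun _ => 1) := by
  have hkR : (0:ℝ) < k := by exact_mod_cast hk
  have hkne : (k:ℝ) ≠ 0 := ne_of_gt hkR
  set o : Fin k → ℝ := fun _ => 1 with ho
  set s : ℝ := o ⬝ᵥ η with hs
  set q : ℝ := η ⬝ᵥ η with hq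
  set d : ℝ := (1+s)^2 - k*q with hdd
  have hoo : o ⬝ᵥ o = (k:ℝ) := by
    rw [ho]; simp [dotProduct]
  have hoη : o ⬝ᵥ η = s := hs.symm
  have hηo : η ⬝ᵥ o = s := by rw [dotProduct_comm]; try exact hoη
  have hηη : η ⬝ᵥ η = q := hq.symm
  -- mulVec formula
  have hmul : ∀ v, S.mulVec v = v + (o ⬝ᵥ v) • η + (η ⬝ᵥ v) • o := by
    intro v
    rw [hSdef]
    simp [add_mulVec, vmv_mulVec, one_mulVec]
  -- d > 0
  have hd : 0 < d := by
    set u : Fin k → ℝ := (1+s) • o - (k:ℝ) • η with hu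
    have hune : u ≠ 0 := by
      intro h
      have hηi : ∀ i, η i = (1+s)/(k:ℝ) := by
        intro i
        have h2 := congrFun h i
        rw [hu] at h2
        simp [ho, sub_eq_zero] at h2
        field_simp
        linarith
      have h1 : s = ∑ i : Fin k, η i := by
        rw [hs, ho]; simp [dotProduct]
      have h2 : ∑ i : Fin k, η i = 1 + s := by
        rw [Finset.sum_congr rfl fun i _ => hηi i, Finset.sum_const,
          Finset.card_univ, Fintype.card_fin, nsmul_eq_mul]
        field_simp
      have := h1.trans h2
      linarith
    have hpos := hS.dotProduct_mulVec_pos hune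
    have hou : o ⬝ᵥ u = (k:ℝ) := by
      simp only [hu, dotProduct_sub, dotProduct_smul, smul_eq_mul, hoo, hoη]
      try ring
    have hηu : η ⬝ᵥ u = (1+s)*s - k*q := by
      simp only [hu, dotProduct_sub, dotProduct_smul, smul_eq_mul, hηo, hηη]
      try ring
    have huo : u ⬝ᵥ o = (k:ℝ) := by rw [dotProduct_comm]; try exact hou
    have huη : u ⬝ᵥ η = (1+s)*s - k*q := by rw [dotProduct_comm]; try exact hηu
    have huu : u ⬝ᵥ u = (1+s)^2*k - 2*k*s*(1+s) + k^2*q := by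
      conv_lhs => rw [hu]
      simp only [sub_dotProduct, smul_dotProduct, smul_eq_mul, hou, hηu]
      rw [← hu, hou, hηu]
      try ring
    have hkey : star u ⬝ᵥ S.mulVec u = k * d := by
      rw [hmul, hou, hηu, star_trivial]
      simp only [dotProduct_add, dotProduct_smul, smul_eq_mul, huu, huo, huη]
      rw [hdd]
      try ring
    rw [hkey] at hpos
    nlinarith
  have hdne : d ≠ 0 := ne_of_gt hd
  have hdne' : (1+s)^2 - (k:ℝ)*q ≠ 0 := by rw [← hdd]; exact hdne
  -- explicit formula for S⁻¹ *ᵥ 1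
  set x₀ : Fin k → ℝ := d⁻¹ • ((1+s) • o - (k:ℝ) • η) with hx₀
  have hox : o ⬝ᵥ x₀ = d⁻¹ * k := by
    simp only [hx₀, dotProduct_smul, dotProduct_sub, smul_eq_mul, hoo, hoη]
    try ring
  have hηx : η ⬝ᵥ x₀ = d⁻¹ * ((1+s)*s - k*q) := by
    simp only [hx₀, dotProduct_smul, dotProduct_sub, smul_eq_mul, hηo, hηη]
    try ring
  have hSx₀ : S.mulVec x₀ = o := by
    rw [hmul, hox, hηx]
    ext i
    simp only [hx₀, ho, Pi.add_apply, Pi.smul_apply, Pi.sub_apply, smul_eq_mul, mul_one]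
    rw [hdd]
    field_simp
    try ring
  have hdet : IsUnit S.det := isUnit_iff_ne_zero.mpr (ne_of_gt hS.det_pos)
  have hinv1 : S⁻¹ * S = 1 := nonsing_inv_mul S hdet
  have hinv2 : S * S⁻¹ = 1 := mul_nonsing_inv S hdet
  have hx : S⁻¹.mulVec o = x₀ := by
    rw [← hSx₀, mulVec_mulVec, hinv1, one_mulVec]
  rw [hx, hox]
  have hSo : S.mulVec o = (1+s) • o + (k:ℝ) • η := by
    rw [hmul, hoo, hηo]
    ext i
    simp [ho]
    try ring
  -- multiply both sides by S
  have key : S * (S⁻¹ - (d⁻¹ * (k:ℝ))⁻¹ • vecMulVec x₀ x₀)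
      = S * (1 - (k:ℝ)⁻¹ • vecMulVec o o) := by
    rw [mul_sub, mul_sub, hinv2, Matrix.mul_smul, Matrix.mul_smul, mul_vmv, mul_vmv,
      hSx₀, mul_one, hSo, hSdef]
    ext i j
    rcases eq_or_ne i j with h | h
    · subst h
      simp only [Matrix.sub_apply, Matrix.add_apply, Matrix.smul_apply,
        Matrix.one_apply_eq, vecMulVec_apply, hx₀, ho, Pi.smul_apply, Pi.sub_apply,
        Pi.add_apply, smul_eq_mul, mul_one, one_mul]
      rw [hdd]
      field_simp
      try ring
    · simp only [Matrix.sub_apply, Matrix.add_apply, Matrix.smul_apply,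
        Matrix.one_apply_ne h, vecMulVec_apply, hx₀, ho, Pi.smul_apply, Pi.sub_apply,
        Pi.add_apply, smul_eq_mul, mul_one, one_mul]
      rw [hdd]
      field_simp
      try ring
  have h2 := congrArg (fun M => S⁻¹ * M) key
  simpa only [← Matrix.mul_assoc, hinv1, Matrix.one_mul] using h2
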